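/- Let (G, Ḡ, G*, φ₊, φ₋) be a factorized group and define s : G* → G* by s(x) = ψ⁻¹(φ₋(x)⁻¹ ψ(x) φ₋(x)). Then for all x ∈ G*, R(x, s(x)) = (s(x), x), where R(x,y) = (xL(x,y), xR(x,y)) is the associated Yang–Baxter map. Moreover, s(x) is the unique z ∈ G* with R(x, z) = (z, x). -/
import Mathlib


/-- A factorized group: groups `Gb` (Ḡ) and `Gs` (G*), a normal subgroup `G` of `Gb`,
and group homomorphisms `φp, φm : Gs → Gb` such that `ψ x = φp x * (φm x)⁻¹` is a
bijection from `Gs` onto `G`. -/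
structure FactorizedGroup (Gb Gs : Type*) [Group Gb] [Group Gs] where
  G : Subgroup Gb
  normal : G.Normal
  φp : Gs →* Gb
  φm : Gs →* Gb
  mem_G : ∀ x : Gs, φp x * (φm x)⁻¹ ∈ G
  bij : Function.Bijective (fun x : Gs => (⟨φp x * (φm x)⁻¹, mem_G x⟩ : G))

namespace FactorizedGroup

variable {Gb Gs : Type*} [Group Gb] [Group Gs] (FG : FactorizedGroup Gb Gs)

/-- The map `ψ : G* → Ḡ`. -/
def ψ (x : Gs) : Gb := FG.φp x * (FG.φm x)⁻¹

/-- The inverse of `ψ` (defined on the image `G` of `ψ`). -/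
noncomputable def ψinv (g : Gb) : Gs :=
  haveI : Nonempty Gs := ⟨1⟩
  Function.invFun FG.ψ g

/-- `xR(x,y) = ψ⁻¹(φ₋(x) ψ(y) φ₋(x)⁻¹)`. -/
noncomputable def xR (x y : Gs) : Gs := FG.ψinv (FG.φm x * FG.ψ y * (FG.φm x)⁻¹)

/-- `xL(x,y) = ψ⁻¹(φ₊(xR(x,y))⁻¹ ψ(x) φ₊(xR(x,y)))`. -/
noncomputable def xL (x y : Gs) : Gs :=
  FG.ψinv ((FG.φp (FG.xR x y))⁻¹ * FG.ψ x * FG.φp (FG.xR x y))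

/-- The Yang–Baxter map `R(x,y) = (xL(x,y), xR(x,y))`. -/
noncomputable def Rmap : Gs × Gs → Gs × Gs := fun p => (FG.xL p.1 p.2, FG.xR p.1 p.2)

end FactorizedGroup


/-- The stabilization map `s(x) = ψ⁻¹(φ₋(x)⁻¹ ψ(x) φ₋(x))`. -/
noncomputable def FactorizedGroup.s {Gb Gs : Type*} [Group Gb] [Group Gs]
    (FG : FactorizedGroup Gb Gs) (x : Gs) : Gs :=
  FG.ψinv ((FG.φm x)⁻¹ * FG.ψ x * FG.φm x)


namespace FactorizedGroup

variable {Gb Gs : Type*} [Group Gb] [Group Gs] (FG : FactorizedGroup Gb Gs)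

lemma ψ_inj : Function.Injective FG.ψ := by
  intro a b h
  exact FG.bij.injective (Subtype.ext h)

lemma ψinv_ψ (x : Gs) : FG.ψinv (FG.ψ x) = x := by
  haveI : Nonempty Gs := ⟨1⟩
  exact Function.leftInverse_invFun FG.ψ_inj x

lemma ψ_ψinv {g : Gb} (hg : g ∈ FG.G) : FG.ψ (FG.ψinv g) = g := by
  obtain ⟨y, hy⟩ := FG.bij.surjective ⟨g, hg⟩
  have hy' : FG.ψ y = g := congrArg Subtype.val hy
  rw [← hy', FG.ψinv_ψ]

lemma ψ_mem (x : Gs) : FG.ψ x ∈ FG.G := FG.mem_G x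

lemma ψ_s (x : Gs) : FG.ψ (FG.s x) = (FG.φm x)⁻¹ * FG.ψ x * FG.φm x := by
  apply FG.ψ_ψinv
  simpa using FG.normal.conj_mem _ (FG.ψ_mem x) (FG.φm x)⁻¹

end FactorizedGroup

/-- For every `x ∈ G*`, `R(x, s(x)) = (s(x), x)`, and `s(x)` is the unique `z` with
`R(x, z) = (z, x)`. -/
theorem factorizedGroup_s_spec {Gb Gs : Type*} [Group Gb] [Group Gs]
    (FG : FactorizedGroup Gb Gs) (x : Gs) :
    FG.Rmap (x, FG.s x) = (FG.s x, x) ∧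
      ∀ z : Gs, FG.Rmap (x, z) = (z, x) → z = FG.s x := by
  have hmem : ∀ (g : Gb) (y : Gs), g * FG.ψ y * g⁻¹ ∈ FG.G := fun g y =>
    FG.normal.conj_mem _ (FG.ψ_mem y) g
  have hR : FG.xR x (FG.s x) = x := by
    unfold FactorizedGroup.xR
    rw [FG.ψ_s]
    group
    exact FG.ψinv_ψ x
  have hL : FG.xL x (FG.s x) = FG.s x := by
    unfold FactorizedGroup.xL
    rw [hR]
    have key : (FG.φp x)⁻¹ * FG.ψ x * FG.φp x = (FG.φm x)⁻¹ * FG.ψ x * FG.φm x := by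
      unfold FactorizedGroup.ψ
      group
    rw [key]
    rfl
  refine ⟨by simp [FactorizedGroup.Rmap, hR, hL], fun z hz => ?_⟩
  have hzR : FG.xR x z = x := congrArg Prod.snd hz
  have h1 : FG.ψ (FG.xR x z) = FG.φm x * FG.ψ z * (FG.φm x)⁻¹ :=
    FG.ψ_ψinv (hmem _ _)
  rw [hzR] at h1
  apply FG.ψ_inj
  rw [FG.ψ_s, h1]
  group
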